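/- Let σ be a hyperbolic singularity of a C¹ vector field X on M³ whose linearization DX(σ) has three real eigenvalues λ_1 < λ_2 < 0 < λ_3 with λ_2 + λ_3 < 0, and let Γ ∪ {σ} be a compact invariant set where Γ is a homoclinic orbit of σ. Suppose T_{Γ∪σ}M³ = E ⊕ F is a dominated splitting with respect to the tangent flow Φ_t with dim E = 1 and E(σ) equal to the strong stable eigenspace of λ_1. Then, since the unique ergodic invariant probability measure of the flow restricted to Γ ∪ {σ} is the Dirac measure at σ, the bundle E is uniformly contracting: there are C ≥ 1 and λ > 0 with ‖Φ_t|_{E(x)}‖ ≤ C e^{−λt} for all x ∈ Γ ∪ {σ} and t ≥ 0. -/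

import Mathlib

open Filter Topology

/-- (Uniform contraction of the dominated one-dimensional bundle over
a homoclinic loop of a Lorenz-like singularity.)  `Λ = Γ ∪ {σ}` where `σ` is a fixed
point of the flow and `Γ` is a homoclinic orbit of `σ` (the orbit of `x₀ ≠ σ` with
`φ_t(x₀) → σ` as `t → ±∞`).  The eigenvalues of `DX(σ)` are real with
`λ₁ < λ₂ < 0 < λ₃` and `λ₂ + λ₃ < 0`.  The norm of the tangent flow on the
one-dimensional bundle `E` of the dominated splitting `E ⊕ F` is abstracted as a
continuous positive multiplicative cocycle `ν t x = ‖Φ_t|_{E(x)}‖`, with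
`ν t σ = e^{λ₁ t}` since `E(σ)` is the strong stable eigenspace; domination is
abstracted by the cocycle `νF t y = ‖Φ_{−t}|_{F(y)}‖` via
`ν t x · νF t (φ_t x) ≤ C₀ e^{−λ₀ t}`.  Since the unique ergodic (hence the unique
invariant) probability measure of `φ|_Λ` is `δ_σ`, the bundle `E` is uniformly
contracting: there are `C ≥ 1` and `λ > 0` with `ν t x ≤ C e^{−λ t}` on `Λ`. -/
theorem stmt14 {M : Type*} [MetricSpace M] [CompactSpace M]
    (φ : ℝ → M → M) (hφ : Continuous fun p : ℝ × M => φ p.1 p.2)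
    (hφ0 : ∀ x, φ 0 x = x) (hφadd : ∀ s t x, φ (s + t) x = φ s (φ t x))
    (σ x₀ : M) (hx₀ : x₀ ≠ σ) (hσfix : ∀ t : ℝ, φ t σ = σ)
    (Λ : Set M) (hΛ : Λ = insert σ (Set.range fun t : ℝ => φ t x₀))
    (hΛcomp : IsCompact Λ)
    (hhomoω : Tendsto (fun t : ℝ => φ t x₀) atTop (𝓝 σ))
    (hhomoα : Tendsto (fun t : ℝ => φ t x₀) atBot (𝓝 σ))
    (lam₁ lam₂ lam₃ : ℝ) (h12 : lam₁ < lam₂) (h20 : lam₂ < 0) (h03 : 0 < lam₃)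
    (h23 : lam₂ + lam₃ < 0)
    (ν : ℝ → M → ℝ) (hνc : Continuous fun p : ℝ × M => ν p.1 p.2)
    (hνpos : ∀ t x, 0 < ν t x) (hν0 : ∀ x, ν 0 x = 1)
    (hνcoc : ∀ s t x, ν (s + t) x = ν s (φ t x) * ν t x)
    (hνσ : ∀ t : ℝ, ν t σ = Real.exp (lam₁ * t))
    -- the splitting `E ⊕ F` is dominated:
    (νF : ℝ → M → ℝ) (hνFpos : ∀ t x, 0 < νF t x)
    (C₀ lam₀ : ℝ) (hC₀ : 1 ≤ C₀) (hlam₀ : 0 < lam₀)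
    (hdom : ∀ x ∈ Λ, ∀ t : ℝ, 0 ≤ t → ν t x * νF t (φ t x) ≤ C₀ * Real.exp (-lam₀ * t))
    -- the unique invariant probability measure on `Λ` is the Dirac mass at `σ`:
    [MeasurableSpace M] [BorelSpace M]
    (huniq : ∀ μ : MeasureTheory.Measure M, MeasureTheory.IsProbabilityMeasure μ →
      μ Λᶜ = 0 → (∀ t : ℝ, MeasureTheory.MeasurePreserving (φ t) μ μ) →
      μ = MeasureTheory.Measure.dirac σ) :
    ∃ C : ℝ, 1 ≤ C ∧ ∃ lam : ℝ, 0 < lam ∧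
      ∀ x ∈ Λ, ∀ t : ℝ, 0 ≤ t → ν t x ≤ C * Real.exp (-lam * t) := by

  have hlam1 : lam₁ < 0 := lt_trans h12 h20
  -- contraction rate
  set ρ : ℝ := Real.exp (lam₁ / 2) with hρdef
  have hρpos : 0 < ρ := Real.exp_pos _
  have hρlt1 : ρ < 1 := by
    rw [hρdef, Real.exp_lt_one_iff]; linarith
  -- membership facts
  have hσΛ : σ ∈ Λ := by rw [hΛ]; exact Set.mem_insert _ _
  have horbΛ : ∀ s : ℝ, φ s x₀ ∈ Λ := fun s => by
    rw [hΛ]; exact Set.mem_insert_of_mem _ ⟨s, rfl⟩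
  -- the open contracting neighborhood
  have hcont1 : Continuous fun y : M => ν 1 y := by
    have := hνc.comp (Continuous.prodMk (continuous_const : Continuous fun _ : M => (1:ℝ))
      continuous_id)
    exact this
  have hUopen : IsOpen {y : M | ν 1 y < ρ} := isOpen_lt hcont1 continuous_const
  have hσU : σ ∈ {y : M | ν 1 y < ρ} := by
    simp only [Set.mem_setOf_eq, hνσ, mul_one, hρdef]
    exact Real.exp_lt_exp.mpr (by linarith)
  obtain ⟨T₁, hT₁⟩ := eventually_atTop.mp (hhomoω.eventually_mem (hUopen.mem_nhds hσU))
  obtain ⟨T₂, hT₂⟩ := eventually_atBot.mp (hhomoα.eventually_mem (hUopen.mem_nhds hσU))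
  set T : ℝ := max (max T₁ (-T₂)) 0 with hTdef
  have hT0 : 0 ≤ T := le_max_right _ _
  have hT₁T : T₁ ≤ T := (le_max_left T₁ (-T₂)).trans (le_max_left _ 0)
  have hT₂T : -T₂ ≤ T := (le_max_right T₁ (-T₂)).trans (le_max_left _ 0)
  have hgood : ∀ u : ℝ, T ≤ |u| → ν 1 (φ u x₀) < ρ := by
    intro u hu
    rcases le_or_gt 0 u with h | h
    · rw [abs_of_nonneg h] at hu
      exact hT₁ u (by linarith)
    · rw [abs_of_neg h] at hu
      exact hT₂ u (by linarith)
  -- uniform bound B on ν over [0,1] × Λ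
  have hK : IsCompact ((Set.Icc (0:ℝ) 1) ×ˢ Λ) := isCompact_Icc.prod hΛcomp
  have hKne : ((Set.Icc (0:ℝ) 1) ×ˢ Λ).Nonempty :=
    ⟨(0, σ), Set.mk_mem_prod (by norm_num) hσΛ⟩
  obtain ⟨p, -, hp⟩ := hK.exists_isMaxOn hKne hνc.continuousOn
  set B : ℝ := max 1 (ν p.1 p.2) with hBdef
  have hB1 : (1:ℝ) ≤ B := le_max_left _ _
  have hBpos : (0:ℝ) < B := lt_of_lt_of_le one_pos hB1
  have hB : ∀ r ∈ Set.Icc (0:ℝ) 1, ∀ y ∈ Λ, ν r y ≤ B := fun r hr y hy =>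
    le_trans (hp (Set.mk_mem_prod hr hy)) (le_max_right _ _)
  -- product formula for the cocycle at integer times
  have hprod : ∀ (n : ℕ) (y : M), ν n y = ∏ k ∈ Finset.range n, ν 1 (φ (k:ℝ) y) := by
    intro n
    induction n with
    | zero => intro y; simpa using hν0 y
    | succ n ih =>
      intro y
      have h1 : ((n+1 : ℕ) : ℝ) = 1 + (n : ℕ) := by push_cast; ring
      rw [h1, hνcoc 1 n y, Finset.prod_range_succ, ih y, mul_comm]
  -- at most N bad (non-contracting) steps
  set N : ℕ := ⌊2 * T⌋₊ + 1 with hNdef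
  have hcount : ∀ (s : ℝ) (n : ℕ),
      ((Finset.range n).filter (fun k : ℕ => |s + (k:ℝ)| ≤ T)).card ≤ N := by
    intro s n
    set S := (Finset.range n).filter (fun k : ℕ => |s + (k:ℝ)| ≤ T) with hS
    rcases S.eq_empty_or_nonempty with h | h
    · simp [h, hNdef]
    · have hk₀ := S.min'_mem h
      set k₀ := S.min' h with hk0def
      have hsub : S ⊆ Finset.Icc k₀ (k₀ + ⌊2*T⌋₊) := by
        intro k hk
        have h1 : k₀ ≤ k := S.min'_le k hk
        have h2 : |s + (k:ℝ)| ≤ T := (Finset.mem_filter.mp hk).2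
        have h3 : |s + (k₀:ℝ)| ≤ T := (Finset.mem_filter.mp hk₀).2
        have h2' := abs_le.mp h2
        have h3' := abs_le.mp h3
        have h4 : ((k - k₀ : ℕ) : ℝ) ≤ 2 * T := by
          rw [Nat.cast_sub h1]; linarith [h2'.2, h3'.1]
        have h5 : k - k₀ ≤ ⌊2*T⌋₊ := Nat.le_floor h4
        exact Finset.mem_Icc.mpr ⟨h1, by omega⟩
      have hcc := Finset.card_le_card hsub
      rw [Nat.card_Icc] at hcc
      omega
  -- the key integer-time estimate along the orbit
  have hstep : ∀ (s : ℝ) (n : ℕ), ν n (φ s x₀) ≤ B ^ N * ρ ^ (n - N) := by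
    intro s n
    have hφk : ∀ k : ℕ, φ (k:ℝ) (φ s x₀) = φ (s + k) x₀ := fun k => by
      rw [← hφadd, add_comm]
    rw [hprod n (φ s x₀)]
    have hbound : ∀ k ∈ Finset.range n,
        ν 1 (φ (k:ℝ) (φ s x₀)) ≤ if |s + (k:ℝ)| ≤ T then B else ρ := by
      intro k _
      rw [hφk k]
      by_cases h : |s + (k:ℝ)| ≤ T
      · simp only [h, if_true]
        exact hB 1 (by norm_num) _ (horbΛ _)
      · simp only [h, if_false]
        exact le_of_lt (hgood _ (not_le.mp h).le)
    have h1 : (∏ k ∈ Finset.range n, ν 1 (φ (k:ℝ) (φ s x₀)))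
        ≤ ∏ k ∈ Finset.range n, (if |s + (k:ℝ)| ≤ T then B else ρ) :=
      Finset.prod_le_prod (fun k _ => le_of_lt (hνpos _ _)) hbound
    have h2 : (∏ k ∈ Finset.range n, (if |s + (k:ℝ)| ≤ T then B else ρ))
        = B ^ ((Finset.range n).filter (fun k : ℕ => |s + (k:ℝ)| ≤ T)).card
          * ρ ^ ((Finset.range n).filter (fun k : ℕ => ¬ |s + (k:ℝ)| ≤ T)).card := by
      rw [Finset.prod_ite, Finset.prod_const, Finset.prod_const]
    have hc := hcount s n
    have hcards : ((Finset.range n).filter (fun k : ℕ => |s + (k:ℝ)| ≤ T)).card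
        + ((Finset.range n).filter (fun k : ℕ => ¬ |s + (k:ℝ)| ≤ T)).card = n := by
      rw [Finset.card_filter_add_card_filter_not, Finset.card_range]
    have h3 : B ^ ((Finset.range n).filter (fun k : ℕ => |s + (k:ℝ)| ≤ T)).card ≤ B ^ N :=
      pow_le_pow_right₀ hB1 hc
    have h4 : ρ ^ ((Finset.range n).filter (fun k : ℕ => ¬ |s + (k:ℝ)| ≤ T)).card
        ≤ ρ ^ (n - N) :=
      pow_le_pow_of_le_one hρpos.le hρlt1.le (by omega)
    calc (∏ k ∈ Finset.range n, ν 1 (φ (k:ℝ) (φ s x₀)))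
        ≤ B ^ ((Finset.range n).filter (fun k : ℕ => |s + (k:ℝ)| ≤ T)).card
          * ρ ^ ((Finset.range n).filter (fun k : ℕ => ¬ |s + (k:ℝ)| ≤ T)).card := h2 ▸ h1
      _ ≤ B ^ N * ρ ^ (n - N) :=
          mul_le_mul h3 h4 (pow_nonneg hρpos.le _) (pow_nonneg hBpos.le _)
  -- assemble the constants
  refine ⟨B ^ (N + 1) * Real.exp (-(lam₁/2) * (1 + N)), ?_, -(lam₁/2), by linarith, ?_⟩
  · have h1 : (1:ℝ) ≤ B ^ (N + 1) := one_le_pow₀ hB1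
    have h2 : (1:ℝ) ≤ Real.exp (-(lam₁/2) * (1 + N)) := by
      rw [Real.one_le_exp_iff]
      have : (0:ℝ) ≤ (N:ℝ) := Nat.cast_nonneg _
      nlinarith
    calc (1:ℝ) ≤ B ^ (N + 1) := h1
      _ ≤ B ^ (N + 1) * Real.exp (-(lam₁/2) * (1 + N)) :=
          le_mul_of_one_le_right (by positivity) h2
  · intro x hx t ht
    have hexp_t : Real.exp (-(-(lam₁/2)) * t) = Real.exp ((lam₁/2) * t) := by
      norm_num
    rw [hΛ] at hx
    rcases hx with rfl | ⟨s, rfl⟩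
    · -- x = σ
      rw [hνσ, hexp_t]
      have hle : Real.exp (lam₁ * t) ≤ Real.exp ((lam₁/2) * t) :=
        Real.exp_le_exp.mpr (by nlinarith)
      have hC1 : (1:ℝ) ≤ B ^ (N + 1) * Real.exp (-(lam₁/2) * (1 + N)) := by
        have h1 : (1:ℝ) ≤ B ^ (N + 1) := one_le_pow₀ hB1
        have h2 : (1:ℝ) ≤ Real.exp (-(lam₁/2) * (1 + N)) := by
          rw [Real.one_le_exp_iff]
          have : (0:ℝ) ≤ (N:ℝ) := Nat.cast_nonneg _
          nlinarith
        calc (1:ℝ) ≤ B ^ (N + 1) := h1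
          _ ≤ _ := le_mul_of_one_le_right (by positivity) h2
      calc Real.exp (lam₁ * t) ≤ Real.exp ((lam₁/2) * t) := hle
        _ ≤ (B ^ (N + 1) * Real.exp (-(lam₁/2) * (1 + N))) * Real.exp ((lam₁/2) * t) :=
            le_mul_of_one_le_left (Real.exp_pos _).le hC1
    · -- x on the homoclinic orbit
      set n : ℕ := ⌊t⌋₊ with hn
      have hn1 : (n:ℝ) ≤ t := Nat.floor_le ht
      have hn2 : t < (n:ℝ) + 1 := Nat.lt_floor_add_one t
      have hsplit : ν t (φ s x₀) = ν (t - n) (φ (n:ℝ) (φ s x₀)) * ν (n:ℝ) (φ s x₀) := by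
        have h := hνcoc (t - n) (n:ℝ) (φ s x₀)
        rwa [sub_add_cancel] at h
      have hA : ν (t - n) (φ (n:ℝ) (φ s x₀)) ≤ B := by
        have hmem : φ (n:ℝ) (φ s x₀) ∈ Λ := by rw [← hφadd]; exact horbΛ _
        exact hB _ ⟨by linarith, by linarith⟩ _ hmem
      have hBnd := hstep s n
      -- bound the power of ρ
      have hmge : ((n - N : ℕ) : ℝ) ≥ (n:ℝ) - N := by
        rcases le_or_gt N n with h | h
        · rw [Nat.cast_sub h]
        · have h0 : n - N = 0 := by omega
          rw [h0]
          have h1 : (n:ℝ) ≤ (N:ℝ) := by exact_mod_cast h.le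
          push_cast at h1 ⊢
          linarith
      have hρpow : ρ ^ (n - N) ≤ Real.exp (-(lam₁/2) * (1 + N)) * Real.exp ((lam₁/2) * t) := by
        have he1 : ρ ^ (n - N) = Real.exp (((n - N : ℕ):ℝ) * (lam₁/2)) := by
          rw [hρdef, ← Real.exp_nat_mul]
        rw [he1, ← Real.exp_add]
        apply Real.exp_le_exp.mpr
        have h1 : ((n - N : ℕ):ℝ) ≥ t - 1 - N := by linarith
        nlinarith [h1, hlam1]
      rw [hsplit, hexp_t]
      have hstep2 : ν (t - n) (φ (n:ℝ) (φ s x₀)) * ν (n:ℝ) (φ s x₀)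
          ≤ B * (B ^ N * ρ ^ (n - N)) :=
        mul_le_mul hA hBnd (hνpos _ _).le hBpos.le
      calc ν (t - n) (φ (n:ℝ) (φ s x₀)) * ν (n:ℝ) (φ s x₀)
          ≤ B * (B ^ N * ρ ^ (n - N)) := hstep2
        _ = B ^ (N + 1) * ρ ^ (n - N) := by ring
        _ ≤ B ^ (N + 1) * (Real.exp (-(lam₁/2) * (1 + N)) * Real.exp ((lam₁/2) * t)) :=
            mul_le_mul_of_nonneg_left hρpow (by positivity)
        _ = B ^ (N + 1) * Real.exp (-(lam₁/2) * (1 + N)) * Real.exp ((lam₁/2) * t) := by ring
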